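/- Every finitary argumentation framework F has at least one cf1.5-extension. -/

import Mathlib

/-!
Basic notions of abstract argumentation frameworks, following
Andrews–San Mauro, "SCC-recursiveness in infinite argumentation".
-/

universe u

/-- An argumentation framework: a set `A` of arguments together with an
attack relation `R ⊆ A × A`. -/
structure AF (α : Type u) where
  A : Set α
  R : α → α → Prop
  attack_mem : ∀ ⦃a b : α⦄, R a b → a ∈ A ∧ b ∈ A

namespace AF

variable {α : Type u}

/-- The restriction `F↾U = (A ∩ U, R ∩ (U × U))`. -/
def restrict (F : AF α) (U : Set α) : AF α where
  A := F.A ∩ U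
  R a b := F.R a b ∧ a ∈ U ∧ b ∈ U
  attack_mem := by
    intro a b h
    exact ⟨⟨(F.attack_mem h.1).1, h.2.1⟩, ⟨(F.attack_mem h.1).2, h.2.2⟩⟩

/-- `S` is conflict-free: `S ⊆ A` and no argument of `S` attacks another. -/
def ConflictFree (F : AF α) (S : Set α) : Prop :=
  S ⊆ F.A ∧ ∀ a ∈ S, ∀ b ∈ S, ¬ F.R a b

/-- `S` is a naive extension: conflict-free and ⊆-maximal among conflict-free sets. -/
def Naive (F : AF α) (S : Set α) : Prop :=
  ConflictFree F S ∧ ∀ T, ConflictFree F T → S ⊆ T → S = T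

/-- `S⁺`: the set of arguments attacked by `S`. -/
def plus (F : AF α) (S : Set α) : Set α := {x | ∃ y ∈ S, F.R y x}

/-- The range `S⊕ = S ∪ S⁺`. -/
def rng (F : AF α) (S : Set α) : Set α := S ∪ plus F S

/-- `S` is a stage extension: conflict-free with ⊆-maximal range among
conflict-free sets. -/
def Stage (F : AF α) (S : Set α) : Prop :=
  ConflictFree F S ∧ ¬ ∃ T, ConflictFree F T ∧ rng F S ⊂ rng F T

/-- `F` is finitary: every argument has finitely many attackers. -/
def Finitary (F : AF α) : Prop := ∀ a, {x | F.R x a}.Finite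

/-- There is a directed path from `a` to `b` in `F` (both being arguments of `F`). -/
def Reach (F : AF α) (a b : α) : Prop :=
  a ∈ F.A ∧ b ∈ F.A ∧ Relation.ReflTransGen F.R a b

/-- The strongly connected component of `a` in `F`. -/
def SCCof (F : AF α) (a : α) : Set α := {b | Reach F a b ∧ Reach F b a}

/-- `X` is a strongly connected component of `F`. -/
def IsSCC (F : AF α) (X : Set α) : Prop := ∃ a ∈ F.A, X = SCCof F a

/-- `D_S(X)`: the elements of `X` attacked by an element of `S` outside `X`. -/
def Dset (F : AF α) (S X : Set α) : Set α := {b ∈ X | ∃ a ∈ S \ X, F.R a b}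

/-- `S` is a cf1.5-extension of `F`. -/
def CF15 (F : AF α) (S : Set α) : Prop :=
  ConflictFree F S ∧
    ∀ X, IsSCC F X → Naive (F.restrict (X \ Dset F S X)) (S ∩ X)

/-- `S` is a stg1.5-extension of `F`. -/
def STG15 (F : AF α) (S : Set α) : Prop :=
  ConflictFree F S ∧
    ∀ X, IsSCC F X → Stage (F.restrict (X \ Dset F S X)) (S ∩ X)

/-- `C_S^α(a)`, defined by transfinite recursion. -/
noncomputable def Cseq (F : AF α) (S : Set α) (a : α) (o : Ordinal.{0}) : Set α :=
  Ordinal.limitRecOn o (SCCof F a)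
    (fun _ C => SCCof (F.restrict (C \ Dset F S C)) a)
    (fun o' _ ih => SCCof (F.restrict (⋂ β : {β : Ordinal.{0} // β < o'}, ih β.1 β.2)) a)

/-- The component ordinal `α_S(a)`: the least `α` with `a ∉ C_S^α(a)` or
`C_S^{α+1}(a) = C_S^α(a)`. -/
noncomputable def alphaS (F : AF α) (S : Set α) (a : α) : Ordinal.{0} :=
  sInf {o | a ∉ Cseq F S a o ∨ Cseq F S a (o + 1) = Cseq F S a o}

/-- `S` is an icft-extension (tfcf2-extension) of `F`. -/
def ICFT (F : AF α) (S : Set α) : Prop :=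
  ConflictFree F S ∧ ∀ a ∈ F.A,
    a ∉ Cseq F S a (alphaS F S a) ∨
      Naive (F.restrict (Cseq F S a (alphaS F S a))) (S ∩ Cseq F S a (alphaS F S a))

/-- `S` is an istgt-extension (tf-stg2-extension) of `F`. -/
def ISTGT (F : AF α) (S : Set α) : Prop :=
  ConflictFree F S ∧ ∀ a ∈ F.A,
    a ∉ Cseq F S a (alphaS F S a) ∨
      Stage (F.restrict (Cseq F S a (alphaS F S a))) (S ∩ Cseq F S a (alphaS F S a))

/-- The characteristic function `f_F`. -/
def charF (F : AF α) (S : Set α) : Set α :=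
  {x ∈ F.A | ∀ y, F.R y x → ∃ z ∈ S, F.R z y}

/-- `G` is the grounded extension of `F`: the least fixed point of `f_F`. -/
def IsGrounded (F : AF α) (G : Set α) : Prop :=
  charF F G = G ∧ ∀ T, charF F T = T → G ⊆ T

/-- `conf(F)`: the set of conflicting pairs of `F`. -/
def confl (F : AF α) : Set (α × α) := {p | F.R p.1 p.2 ∨ F.R p.2 p.1}

/-- The operator `Δ_{F,S}(D)`. -/
def DeltaOp (F : AF α) (S D : Set α) : Set α :=
  {a ∈ F.A | ∃ b ∈ S, F.R b a ∧ ¬ Reach (F.restrict (F.A \ D)) a b}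

/-- `Δ^α_{F,S}`, defined by transfinite recursion. -/
noncomputable def Deltaseq (F : AF α) (S : Set α) (o : Ordinal.{0}) : Set α :=
  Ordinal.limitRecOn o (∅ : Set α)
    (fun _ D => DeltaOp F S D)
    (fun o' _ ih => ⋃ β : {β : Ordinal.{0} // β < o'}, ih β.1 β.2)

/-- The least fixed point `Δ_{F,S}` of the monotone operator `Δ_{F,S}(·)`,
given by Knaster–Tarski as the intersection of all prefixed points. -/
def DeltaFix (F : AF α) (S : Set α) : Set α :=
  ⋂₀ {D | DeltaOp F S D ⊆ D}

end AF

section CF15Aux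

open AF Relation Set
open scoped Classical

variable {α : Type u}

/-- Symmetric conflict. -/
def Confl (F : AF α) (u v : α) : Prop := F.R u v ∨ F.R v u

lemma reach_trans {F : AF α} {a b c : α} (h1 : Reach F a b) (h2 : Reach F b c) :
    Reach F a c :=
  ⟨h1.1, h2.2.1, h1.2.2.trans h2.2.2⟩

lemma mem_scc_self {F : AF α} {a : α} (ha : a ∈ F.A) : a ∈ SCCof F a :=
  ⟨⟨ha, ha, ReflTransGen.refl⟩, ⟨ha, ha, ReflTransGen.refl⟩⟩

lemma scc_eq {F : AF α} {a b : α} (h : b ∈ SCCof F a) : SCCof F b = SCCof F a := by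
  ext c
  constructor
  · rintro ⟨h1, h2⟩
    exact ⟨reach_trans h.1 h1, reach_trans h2 h.2⟩
  · rintro ⟨h1, h2⟩
    exact ⟨reach_trans h.2 h1, reach_trans h2 h.1⟩

lemma countable_ancestors (F : AF α) (hF : Finitary F) (v : α) :
    {u | ReflTransGen F.R u v}.Countable := by
  let L : ℕ → Set α := fun n =>
    Nat.rec ({v} : Set α) (fun _ Ln => Ln ∪ ⋃ b ∈ Ln, {a | F.R a b}) n
  have hfin : ∀ n, (L n).Finite := by
    intro n
    induction n with
    | zero => exact Set.finite_singleton v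
    | succ n ih => exact ih.union (ih.biUnion (fun b _ => hF b))
  have hsub : {u | ReflTransGen F.R u v} ⊆ ⋃ n, L n := by
    intro u hu
    induction hu using ReflTransGen.head_induction_on with
    | refl => exact Set.mem_iUnion.2 ⟨0, rfl⟩
    | head hab _ ih =>
      obtain ⟨n, hn⟩ := Set.mem_iUnion.1 ih
      exact Set.mem_iUnion.2 ⟨n + 1, Or.inr (Set.mem_biUnion hn hab)⟩
  exact (Set.countable_iUnion (fun n => (hfin n).countable)).mono hsub

lemma countable_scc (F : AF α) (hF : Finitary F) (a : α) : (SCCof F a).Countable :=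
  (countable_ancestors F hF a).mono (fun _ hb => hb.2.2.2)

/-- A uniform choice of injection-to-ℕ for countable sets. -/
noncomputable def iotaFun : Set α → α → ℕ := fun Y =>
  if h : Y.Countable then Classical.choose (Set.countable_iff_exists_injOn.1 h)
  else fun _ => 0

lemma iotaFun_injOn {Y : Set α} (h : Y.Countable) : Set.InjOn (iotaFun Y) Y := by
  unfold iotaFun
  rw [dif_pos h]
  exact Classical.choose_spec (Set.countable_iff_exists_injOn.1 h)

/-- Index of an argument within its SCC. -/
noncomputable def idx (F : AF α) : α → ℕ := fun v => iotaFun (SCCof F v) v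

lemma idx_injOn (F : AF α) (hF : Finitary F) (a : α) :
    Set.InjOn (idx F) (SCCof F a) := by
  intro u hu w hw h
  have hu' : idx F u = iotaFun (SCCof F a) u := by unfold idx; rw [scc_eq hu]
  have hw' : idx F w = iotaFun (SCCof F a) w := by unfold idx; rw [scc_eq hw]
  exact iotaFun_injOn (countable_scc F hF a) hu hw (by rw [← hu', ← hw', h])

/-- Attackers of `v` from outside its SCC. -/
def AttOut (F : AF α) (v : α) : Set α := {a | F.R a v ∧ a ∉ SCCof F v}

/-- Earlier conflicting members of the SCC of `v`. -/
noncomputable def ECset (F : AF α) (v : α) : Set α :=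
  {u | u ∈ SCCof F v ∧ Confl F u v ∧ idx F u < idx F v}

/-- The (finite) support of the greedy condition at `v`. -/
noncomputable def Tset (F : AF α) (v : α) : Set α := AttOut F v ∪ ECset F v

lemma Tset_finite (F : AF α) (hF : Finitary F) (v : α) : (Tset F v).Finite := by
  apply Set.Finite.union
  · exact (hF v).subset (fun a ha => ha.1)
  · have hinj : Set.InjOn (idx F) (ECset F v) :=
      (idx_injOn F hF v).mono (fun u hu => hu.1)
    have himg : (idx F '' ECset F v).Finite :=
      (Set.finite_Iio (idx F v)).subset (by rintro _ ⟨u, hu, rfl⟩; exact hu.2.2)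
    exact Set.Finite.of_finite_image himg hinj

lemma not_mem_Tset (F : AF α) (v : α) : v ∉ Tset F v := by
  rintro (⟨hR, hns⟩ | ⟨_, _, hlt⟩)
  · exact hns (mem_scc_self (F.attack_mem hR).2)
  · exact lt_irrefl _ hlt

/-- The greedy fixed-point condition. -/
def PFix (F : AF α) (S : Set α) (v : α) : Prop :=
  v ∈ F.A ∧ ¬ F.R v v ∧ (∀ a ∈ AttOut F v, a ∉ S) ∧ (∀ u ∈ ECset F v, u ∉ S)

lemma PFix_local {F : AF α} {S S' : Set α} {v : α}
    (h : ∀ u ∈ Tset F v, (u ∈ S ↔ u ∈ S')) : PFix F S v ↔ PFix F S' v := by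
  unfold PFix
  refine and_congr_right fun _ => and_congr_right fun _ => and_congr ?_ ?_
  · constructor
    · intro h3 a ha hs' ; exact h3 a ha ((h a (Or.inl ha)).2 hs')
    · intro h3 a ha hs ; exact h3 a ha ((h a (Or.inl ha)).1 hs)
  · constructor
    · intro h4 u hu hs' ; exact h4 u hu ((h u (Or.inr hu)).2 hs')
    · intro h4 u hu hs ; exact h4 u hu ((h u (Or.inr hu)).1 hs)

/-- The dependency relation: `u` is read when computing `v`. -/
noncomputable def ddep (F : AF α) : α → α → Prop := fun u v => u ∈ Tset F v

lemma ddep_rtg {F : AF α} {u v : α} (h : ddep F u v) : ReflTransGen F.R u v := by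
  rcases h with ⟨hR, _⟩ | ⟨hscc, _, _⟩
  · exact ReflTransGen.single hR
  · exact hscc.2.2.2

lemma ddep_memA {F : AF α} {u v : α} (h : ddep F u v) : u ∈ F.A ∧ v ∈ F.A := by
  rcases h with ⟨hR, _⟩ | ⟨hscc, _, _⟩
  · exact ⟨(F.attack_mem hR).1, (F.attack_mem hR).2⟩
  · exact ⟨hscc.2.1, hscc.2.2.1⟩

lemma ddep_idx_lt {F : AF α} {u v : α} (h : ddep F u v)
    (hback : ReflTransGen F.R v u) : idx F u < idx F v := by
  have hmem := ddep_memA h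
  have huscc : u ∈ SCCof F v :=
    ⟨⟨hmem.2, hmem.1, hback⟩, ⟨hmem.1, hmem.2, ddep_rtg h⟩⟩
  rcases h with ⟨_, hns⟩ | ⟨_, _, hlt⟩
  · exact absurd huscc hns
  · exact hlt

lemma tg_rtg {F : AF α} {u v : α} (h : Relation.TransGen (ddep F) u v) :
    ReflTransGen F.R u v := by
  induction h with
  | single h => exact ddep_rtg h
  | tail _ h ih => exact ih.trans (ddep_rtg h)

lemma tg_idx_lt {F : AF α} {u v : α} (h : Relation.TransGen (ddep F) u v) :
    ReflTransGen F.R v u → idx F u < idx F v := by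
  induction h with
  | single h => exact fun hback => ddep_idx_lt h hback
  | @tail b c h1 h2 ih =>
    intro hback
    have h3 := ih ((ddep_rtg h2).trans hback)
    have h4 := ddep_idx_lt h2 (hback.trans (tg_rtg h1))
    exact h3.trans h4

lemma no_ddep_cycle {F : AF α} {v : α} (h : Relation.TransGen (ddep F) v v) : False :=
  lt_irrefl _ (tg_idx_lt h ReflTransGen.refl)

lemma tg_flip {β : Type*} {r : β → β → Prop} {u v : β}
    (h : Relation.TransGen (flip r) u v) : Relation.TransGen r v u := by
  induction h with
  | single h => exact Relation.TransGen.single h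
  | tail _ h ih => exact Relation.TransGen.head h ih

/-- Finite partial solutions exist. -/
lemma finite_solution (F : AF α) (hF : Finitary F) (t : Finset α) :
    ∃ σ : α → Bool, ∀ v ∈ t, (σ v = true ↔ PFix F {u | σ u = true} v) := by
  classical
  induction t using Finset.strongInduction with
  | _ t ih =>
    rcases t.eq_empty_or_nonempty with rfl | hne
    · exact ⟨fun _ => false, by simp⟩
    · -- find an element read by no element of t
      obtain ⟨w, hwt, hw⟩ : ∃ w ∈ t, ∀ x ∈ t, w ∉ Tset F x := by
        set ρ : {z // z ∈ t} → {z // z ∈ t} → Prop :=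
          fun x y => ddep F y.1 x.1 with hρ
        have hirr : ∀ x, ¬ Relation.TransGen ρ x x := by
          intro x hx
          have : Relation.TransGen (flip (ddep F)) x.1 x.1 :=
            Relation.TransGen.lift Subtype.val (fun a b h => h) _ _ hx
          exact no_ddep_cycle (tg_flip this)
        haveI : IsTrans _ (Relation.TransGen ρ) := ⟨fun _ _ _ h1 h2 => h1.trans h2⟩
        haveI : IsIrrefl _ (Relation.TransGen ρ) := ⟨hirr⟩
        have hwf : WellFounded ρ :=
          Subrelation.wf (fun {x y} h => Relation.TransGen.single h)
            (Finite.wellFounded_of_trans_of_irrefl _)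
        obtain ⟨w0, hw0⟩ := hne
        obtain ⟨m, -, hm⟩ := hwf.has_min Set.univ ⟨⟨w0, hw0⟩, Set.mem_univ _⟩
        exact ⟨m.1, m.2, fun x hx hmem => hm ⟨x, hx⟩ (Set.mem_univ _) hmem⟩
      obtain ⟨σ0, hσ0⟩ := ih (t.erase w) (Finset.erase_ssubset hwt)
      set b0 : Bool := if PFix F {u | σ0 u = true} w then true else false with hb0
      set σ : α → Bool := Function.update σ0 w b0 with hσdef
      have hagree : ∀ v ∈ t, ∀ u ∈ Tset F v, (u ∈ {u | σ u = true}) ↔ (u ∈ {u | σ0 u = true}) := by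
        intro v hv u hu
        have huw : u ≠ w := fun h => hw v hv (h ▸ hu)
        simp only [Set.mem_setOf_eq, hσdef, Function.update_of_ne huw]
      refine ⟨σ, fun v hv => ?_⟩
      have hPiff : PFix F {u | σ u = true} v ↔ PFix F {u | σ0 u = true} v :=
        PFix_local (hagree v hv)
      by_cases hvw : v = w
      · subst hvw
        have : σ v = b0 := by simp [hσdef]
        rw [this, hPiff, hb0]
        by_cases hP : PFix F {u | σ0 u = true} v
        · simp [hP]
        · simp [hP]
      · have : σ v = σ0 v := by simp [hσdef, Function.update_of_ne hvw]
        rw [this, hPiff]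
        exact hσ0 v (Finset.mem_erase.2 ⟨hvw, hv⟩)

/-- Existence of the global greedy fixed point, by compactness. -/
lemma exists_fixpoint (F : AF α) (hF : Finitary F) :
    ∃ S : Set α, ∀ v, v ∈ S ↔ PFix F S v := by
  classical
  set Z : α → Set (α → Bool) :=
    fun v => {σ | σ v = true ↔ PFix F {u | σ u = true} v} with hZ
  have hloc : ∀ (v : α) (σ τ : α → Bool), (∀ u ∈ insert v (Tset F v), τ u = σ u) →
      τ ∈ Z v → σ ∈ Z v := by
    intro v σ τ h hτ
    have h1 : τ v = σ v := h v (Set.mem_insert _ _)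
    have h2 : PFix F {u | τ u = true} v ↔ PFix F {u | σ u = true} v :=
      PFix_local (fun u hu => by
        simp only [Set.mem_setOf_eq, h u (Set.mem_insert_of_mem _ hu)])
    have hτ' : τ v = true ↔ PFix F {u | τ u = true} v := hτ
    show σ v = true ↔ PFix F {u | σ u = true} v
    rw [← h1, ← h2]
    exact hτ'
  have hclosed : ∀ v, IsClosed (Z v) := by
    intro v
    rw [← isOpen_compl_iff, isOpen_iff_forall_mem_open]
    intro σ hσ
    refine ⟨{τ | ∀ u ∈ insert v (Tset F v), τ u = σ u}, ?_, ?_, fun u _ => rfl⟩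
    · intro τ hτ hmem
      exact hσ (hloc v σ τ hτ hmem)
    · have heq : {τ : α → Bool | ∀ u ∈ insert v (Tset F v), τ u = σ u} =
          ⋂ u ∈ insert v (Tset F v), (fun τ : α → Bool => τ u) ⁻¹' {σ u} := by
        ext τ; simp
      rw [heq]
      exact Set.Finite.isOpen_biInter ((Tset_finite F hF v).insert v)
        (fun u _ => (isOpen_discrete _).preimage (continuous_apply u))
  have hne : (⋂ v, Z v).Nonempty := by
    by_contra hcon
    rw [Set.not_nonempty_iff_eq_empty] at hcon
    obtain ⟨t, ht⟩ := isCompact_univ.elim_finite_subfamily_closed Z hclosed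
      (by rw [Set.univ_inter]; exact hcon)
    obtain ⟨σ, hσ⟩ := finite_solution F hF t
    have : σ ∈ Set.univ ∩ ⋂ v ∈ t, Z v :=
      ⟨Set.mem_univ _, Set.mem_iInter₂.2 (fun v hv => hσ v hv)⟩
    rw [ht] at this
    exact this
  obtain ⟨σ, hσ⟩ := hne
  refine ⟨{u | σ u = true}, fun v => ?_⟩
  exact Set.mem_iInter.1 hσ v

end CF15Aux


/-- every finitary AF has a cf1.5-extension. -/
theorem statement1 {α : Type u} (F : AF α) (hF : AF.Finitary F) :
    ∃ S, AF.CF15 F S := by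
  classical
  open AF in
  obtain ⟨S, hS⟩ := exists_fixpoint F hF
  have hSA : S ⊆ F.A := fun v hv => ((hS v).1 hv).1
  have hCF : AF.ConflictFree F S := by
    refine ⟨hSA, fun a ha b hb hR => ?_⟩
    have Pa := (hS a).1 ha
    have Pb := (hS b).1 hb
    by_cases hab : a ∈ AF.SCCof F b
    · rcases lt_trichotomy (idx F a) (idx F b) with h | h | h
      · exact Pb.2.2.2 a ⟨hab, Or.inl hR, h⟩ ha
      · have : a = b := idx_injOn F hF b hab (mem_scc_self Pb.1) h
        subst this
        exact Pa.2.1 hR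
      · have hba : b ∈ AF.SCCof F a := by
          rw [scc_eq hab]; exact mem_scc_self Pb.1
        exact Pa.2.2.2 b ⟨hba, Or.inr hR, h⟩ hb
    · exact Pb.2.2.1 a ⟨hR, hab⟩ ha
  refine ⟨S, hCF, ?_⟩
  rintro Xs ⟨a0, ha0, rfl⟩
  set Xset := AF.SCCof F a0 with hXset
  set D := AF.Dset F S Xset with hD
  have hXeq : ∀ v ∈ Xset, AF.SCCof F v = Xset := fun v hv => scc_eq hv
  have hSX : ∀ v ∈ S ∩ Xset, v ∈ F.A ∩ (Xset \ D) := by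
    rintro v ⟨hvS, hvX⟩
    refine ⟨hSA hvS, hvX, ?_⟩
    rintro ⟨-, a, ⟨haS, haX⟩, haR⟩
    exact ((hS v).1 hvS).2.2.1 a ⟨haR, by rw [hXeq v hvX]; exact haX⟩ haS
  have hCFG : AF.ConflictFree (F.restrict (Xset \ D)) (S ∩ Xset) := by
    constructor
    · exact hSX
    · rintro u hu v hv ⟨hR, -, -⟩
      exact hCF.2 u hu.1 v hv.1 hR
  refine ⟨hCFG, ?_⟩
  intro T hT hsub
  refine Set.Subset.antisymm hsub (fun c hcT => ?_)
  obtain ⟨hcA, hcX, hcD⟩ := hT.1 hcT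
  suffices hcS : c ∈ S by exact ⟨hcS, hcX⟩
  by_contra hcS
  have hnP : ¬ PFix F S c := fun hP => hcS ((hS c).2 hP)
  by_cases h2 : F.R c c
  · exact hT.2 c hcT c hcT ⟨h2, ⟨hcX, hcD⟩, ⟨hcX, hcD⟩⟩
  by_cases h3 : ∀ a ∈ AttOut F c, a ∉ S
  · by_cases h4 : ∀ u ∈ ECset F c, u ∉ S
    · exact hnP ⟨hcA, h2, h3, h4⟩
    · push_neg at h4
      obtain ⟨u, ⟨huX, huC, -⟩, huS⟩ := h4
      have huX' : u ∈ Xset := by rw [← hXeq c hcX]; exact huX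
      have huT : u ∈ T := hsub ⟨huS, huX'⟩
      have huU : u ∈ F.A ∩ (Xset \ D) := hSX u ⟨huS, huX'⟩
      rcases huC with hR | hR
      · exact hT.2 u huT c hcT ⟨hR, huU.2, ⟨hcX, hcD⟩⟩
      · exact hT.2 c hcT u huT ⟨hR, ⟨hcX, hcD⟩, huU.2⟩
  · push_neg at h3
    obtain ⟨a, ⟨haR, haX⟩, haS⟩ := h3
    refine hcD ⟨hcX, a, ⟨haS, ?_⟩, haR⟩
    rw [← hXeq c hcX]; exact haX
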